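/- Let S be a semigroup with zero for which there exists a positive integer N such that a^N = 0 for every a ∈ S (a nil semigroup of bounded index). Let n ≥ 1, let x₁, x₂, …, xₙ be pairwise distinct variables, and let v be a word whose length is different from n. If S satisfies the identity x₁x₂⋯xₙ = v, then S satisfies the identity x₁x₂⋯xₙ = 0. -/

import Mathlib

/-- Value of a word (nonempty list of variables) under an assignment `f : V → S`,
computed as an element of `Option S`: `none` for the empty list, and `some` of the
ordered product of the images of the letters otherwise. -/
def evalWord {V S : Type*} [Mul S] (f : V → S) (w : List V) : Option S :=
  w.foldr (fun x o => some (o.elim (f x) (fun s => f x * s))) none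

/-- `ppow a n` is the `n`-th power of `a` for `n ≥ 1` (with the junk value `a` at `n = 0`). -/
def ppow {S : Type*} [Mul S] (a : S) : ℕ → S
  | 0 => a
  | 1 => a
  | n + 2 => ppow a (n + 1) * a

namespace Stmt5

variable {V S : Type*} [SemigroupWithZero S]

/-- Multiplication on `Option S` with `none` as (adjoined) unit. -/
def omul : Option S → Option S → Option S
  | none, b => b
  | some a, none => some a
  | some a, some b => some (a * b)

@[simp] lemma omul_none_left (b : Option S) : omul none b = b := rfl
@[simp] lemma omul_some_none (a : S) : omul (some a) none = some a := rfl
@[simp] lemma omul_some_some (a b : S) : omul (some a) (some b) = some (a * b) := rfl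

@[simp] lemma evalWord_nil (f : V → S) : evalWord f ([] : List V) = none := rfl

lemma evalWord_cons (f : V → S) (y : V) (w : List V) :
    evalWord f (y :: w) = omul (some (f y)) (evalWord f w) := by
  show some ((evalWord f w).elim (f y) (fun s => f y * s)) = _
  cases h : evalWord f w with
  | none => rfl
  | some s => rfl

lemma omul_assoc (a b c : Option S) : omul (omul a b) c = omul a (omul b c) := by
  cases a <;> cases b <;> cases c <;> simp [omul, mul_assoc]

lemma evalWord_append (f : V → S) (w₁ w₂ : List V) :
    evalWord f (w₁ ++ w₂) = omul (evalWord f w₁) (evalWord f w₂) := by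
  induction w₁ with
  | nil => simp
  | cons y t ih => rw [List.cons_append, evalWord_cons, ih, evalWord_cons, omul_assoc]

lemma evalWord_congr {f g : V → S} {w : List V} (h : ∀ y ∈ w, f y = g y) :
    evalWord f w = evalWord g w := by
  induction w with
  | nil => rfl
  | cons y t ih =>
      rw [evalWord_cons, evalWord_cons, h y (by simp), ih (fun z hz => h z (by simp [hz]))]

lemma evalWord_map {W : Type*} (f : V → S) (x : W → V) (w : List W) :
    evalWord f (w.map x) = evalWord (f ∘ x) w := by
  induction w with
  | nil => rfl
  | cons y t ih => rw [List.map_cons, evalWord_cons, ih, evalWord_cons]; rfl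

lemma evalWord_ne_nil (f : V → S) {w : List V} (h : w ≠ []) :
    ∃ s, evalWord f w = some s := by
  cases w with
  | nil => exact absurd rfl h
  | cons y t => rw [evalWord_cons]; cases evalWord f t <;> exact ⟨_, rfl⟩

lemma evalWord_zero_mem (f : V → S) {w : List V} {y : V} (hy : y ∈ w) (hf : f y = 0) :
    evalWord f w = some 0 := by
  induction w with
  | nil => simp at hy
  | cons a t ih =>
      rw [evalWord_cons]
      rcases List.mem_cons.mp hy with h | h
      · subst h; rw [hf]; cases ht : evalWord f t with
        | none => simp
        | some s => simp [zero_mul]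
      · rw [ih h]; simp [mul_zero]

lemma ppow_succ_of_le {a : S} {k : ℕ} (hk : 1 ≤ k) : ppow a (k + 1) = ppow a k * a := by
  rcases Nat.exists_eq_add_of_le hk with ⟨j, rfl⟩
  rw [show (1 : ℕ) + j + 1 = j + 2 by omega, show (1 : ℕ) + j = j + 1 by omega]
  rfl

lemma ppow_add (a : S) (p q : ℕ) (hp : 1 ≤ p) (hq : 1 ≤ q) :
    ppow a (p + q) = ppow a p * ppow a q := by
  induction q with
  | zero => omega
  | succ k ih =>
      rcases Nat.eq_or_lt_of_le hq with h | h
      · have : k = 0 := by omega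
        subst this
        exact ppow_succ_of_le hp
      · have hk : 1 ≤ k := by omega
        rw [show p + (k + 1) = (p + k) + 1 from rfl,
          ppow_succ_of_le (by omega), ih hk, mul_assoc, ← ppow_succ_of_le hk]

lemma evalWord_const {b : S} {w : List V} (h : w ≠ []) :
    evalWord (fun _ => b) w = some (ppow b w.length) := by
  induction w with
  | nil => exact absurd rfl h
  | cons y t ih =>
      cases t with
      | nil => rfl
      | cons z t' =>
          rw [show (y :: z :: t' : List V) = [y] ++ (z :: t') from rfl, evalWord_append,
            ih (by simp)]
          have : evalWord (fun _ => b) [y] = some b := rfl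
          rw [this, omul_some_some]
          congr 1
          have h1 : 1 ≤ (z :: t').length := by simp
          rw [show ([y] ++ z :: t').length = 1 + (z :: t').length by simp [Nat.add_comm],
            ppow_add b 1 _ le_rfl h1]
          rfl

lemma evalWord_replicate (f : V → S) (c : V) {k : ℕ} (hk : 1 ≤ k) :
    evalWord f (List.replicate k c) = some (ppow (f c) k) := by
  have h : evalWord f (List.replicate k c) = evalWord (fun _ => f c) (List.replicate k c) :=
    evalWord_congr (by intro y hy; rw [List.eq_of_mem_replicate hy])
  rw [h, evalWord_const (by simp; omega), List.length_replicate]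

end Stmt5

namespace Stmt5

variable {S : Type*} [SemigroupWithZero S]

/-- A word over `Fin n` is *valid* if it evaluates like `x₀x₁⋯x_{n-1}` under every assignment. -/
def Valid (S : Type*) [SemigroupWithZero S] {n : ℕ} (w : List (Fin n)) : Prop :=
  ∀ g : Fin n → S, evalWord g w = evalWord g (List.finRange n)

lemma eval_flatMap {n : ℕ} (f : Fin n → S) (q : List (Fin n)) (B : Fin n → List (Fin n))
    (g : Fin n → S) (hg : ∀ i, evalWord f (B i) = some (g i)) :
    evalWord f (q.flatMap B) = evalWord g q := by
  induction q with
  | nil => rfl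
  | cons t q' ih =>
      rw [List.flatMap_cons, evalWord_append, hg t, ih, evalWord_cons]

lemma exists_blockvals {n : ℕ} (f : Fin n → S) (B : Fin n → List (Fin n))
    (hB : ∀ i, B i ≠ []) : ∃ g : Fin n → S, ∀ i, evalWord f (B i) = some (g i) := by
  choose g hg using fun i => evalWord_ne_nil f (hB i)
  exact ⟨g, hg⟩

/-- Master substitution lemma: inside a valid word, a tiled factor
`B 0 ++ B 1 ++ ⋯ ++ B (n-1)` may be replaced by the `B`-substitution instance of any
valid pattern `p`. -/
lemma subst {n : ℕ} (p : List (Fin n)) (hp : Valid S p) (B : Fin n → List (Fin n))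
    (hB : ∀ i, B i ≠ []) (X Y : List (Fin n))
    (hhost : Valid S (X ++ (List.finRange n).flatMap B ++ Y)) :
    Valid S (X ++ p.flatMap B ++ Y) := by
  intro f
  obtain ⟨g, hg⟩ := exists_blockvals f B hB
  have key : evalWord f (p.flatMap B) = evalWord f ((List.finRange n).flatMap B) := by
    rw [eval_flatMap f p B g hg, eval_flatMap f _ B g hg, hp g]
  rw [evalWord_append, evalWord_append, key, ← evalWord_append, ← evalWord_append]
  exact hhost f

/-- Block function from a list of blocks. -/
def BF {n : ℕ} (L : List (List (Fin n))) : Fin n → List (Fin n) := fun i => L.getD i.val []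

lemma flatMap_finRange_BF {γ : Type*} :
    ∀ (L : List (List γ)),
      (List.finRange L.length).flatMap (fun i => L.getD i.val []) = L.flatten := by
  intro L
  induction L with
  | nil => rfl
  | cons b L' ih =>
      rw [List.length_cons, List.finRange_succ, List.flatMap_cons, List.flatMap_map]
      have : ((List.finRange L'.length).flatMap
          (fun a : Fin L'.length => (b :: L').getD (a.succ).val []))
          = (List.finRange L'.length).flatMap (fun i => L'.getD i.val []) := by
        congr 1
      rw [show ((b :: L').getD (0 : Fin (L'.length+1)).val []) = b from rfl]
      rw [this, ih]
      rfl

end Stmt5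

namespace Stmt5

variable {S : Type*} [SemigroupWithZero S]

lemma BF_flatten {n : ℕ} (L : List (List (Fin n))) (hL : L.length = n) :
    (List.finRange n).flatMap (BF L) = L.flatten := by
  have := flatMap_finRange_BF L
  rw [hL] at this
  exact this

lemma BF_ne_nil {n : ℕ} (L : List (List (Fin n))) (hL : L.length = n)
    (hne : ∀ b ∈ L, b ≠ []) : ∀ i : Fin n, BF L i ≠ [] := by
  intro i
  have hi : i.val < L.length := by rw [hL]; exact i.isLt
  rw [BF, List.getD_eq_getElem L [] hi]
  exact hne _ (List.getElem_mem hi)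

/-- Value of the block function at the slot right after prefix `L₁`. -/
lemma BF_at {n : ℕ} (L₁ : List (List (Fin n))) (Q : List (Fin n)) (L₂ : List (List (Fin n)))
    (i : Fin n) (h : i.val = L₁.length) : BF (L₁ ++ [Q] ++ L₂) i = Q := by
  rw [BF, List.append_assoc, List.getD_append_right _ _ _ _ (by omega),
    h, Nat.sub_self]
  rfl

lemma map_singleton_flatten {γ : Type*} (A : List γ) :
    (A.map (fun t => [t])).flatten = A := by
  induction A with
  | nil => rfl
  | cons a t ih => simp [ih]

lemma map_singleton_ne {γ : Type*} (A : List γ) : ∀ b ∈ A.map (fun t => [t]), b ≠ [] := by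
  intro b hb
  rcases List.mem_map.mp hb with ⟨a, _, rfl⟩
  simp

lemma split_right {γ : Type*} (A : List γ) (k : ℕ) (h : k ≤ A.length) :
    ∃ A₁ A₂ : List γ, A = A₁ ++ A₂ ∧ A₂.length = k := by
  refine ⟨A.take (A.length - k), A.drop (A.length - k), (List.take_append_drop _ _).symm, ?_⟩
  rw [List.length_drop]
  omega

lemma split_left {γ : Type*} (A : List γ) (k : ℕ) (h : k ≤ A.length) :
    ∃ A₁ A₂ : List γ, A = A₁ ++ A₂ ∧ A₁.length = k :=
  ⟨A.take k, A.drop k, (List.take_append_drop _ _).symm, List.length_take_of_le h⟩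

lemma flatMap_length_ge {n : ℕ} (B : Fin n → List (Fin n)) (hB : ∀ i, B i ≠ [])
    (q : List (Fin n)) : q.length ≤ (q.flatMap B).length := by
  induction q with
  | nil => simp
  | cons t q' ih =>
      rw [List.flatMap_cons, List.length_append, List.length_cons]
      have : 1 ≤ (B t).length := List.length_pos_iff.mpr (hB t)
      omega

end Stmt5

namespace Stmt5

variable {S : Type*} [SemigroupWithZero S]

/-- Split a list into `c` chunks of size `k` (assuming the length is `c * k`). -/
def chunks {γ : Type*} (k : ℕ) : ℕ → List γ → List (List γ)
  | 0, _ => []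
  | c + 1, A => A.take k :: chunks k c (A.drop k)

@[simp] lemma chunks_length {γ : Type*} (k : ℕ) :
    ∀ (c : ℕ) (A : List γ), (chunks k c A).length = c := by
  intro c
  induction c with
  | zero => intro A; rfl
  | succ c ih => intro A; simp [chunks, ih]

lemma chunks_flatten {γ : Type*} {k : ℕ} :
    ∀ {c : ℕ} {A : List γ}, A.length = c * k → (chunks k c A).flatten = A := by
  intro c
  induction c with
  | zero => intro A hA; simp at hA; simp [chunks, hA]
  | succ c ih =>
      intro A hA
      have hk : k ≤ A.length := by rw [hA]; rw [Nat.succ_mul]; omega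
      have hd : (A.drop k).length = c * k := by rw [List.length_drop, hA, Nat.succ_mul]; omega
      simp [chunks, ih hd]

lemma chunks_mem_length {γ : Type*} {k : ℕ} :
    ∀ {c : ℕ} {A : List γ}, A.length = c * k → ∀ b ∈ chunks k c A, b.length = k := by
  intro c
  induction c with
  | zero => intro A hA b hb; simp [chunks] at hb
  | succ c ih =>
      intro A hA b hb
      have hk : k ≤ A.length := by rw [hA]; rw [Nat.succ_mul]; omega
      have hd : (A.drop k).length = c * k := by rw [List.length_drop, hA, Nat.succ_mul]; omega
      rw [chunks, List.mem_cons] at hb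
      rcases hb with hb | hb
      · rw [hb, List.length_take]; omega
      · exact ih hd b hb

lemma chunks_mem_ne {γ : Type*} {k c : ℕ} {A : List γ} (hA : A.length = c * k)
    (hk : 1 ≤ k) : ∀ b ∈ chunks k c A, b ≠ [] := by
  intro b hb
  have := chunks_mem_length hA b hb
  intro hnil
  rw [hnil] at this
  simp at this
  omega

section Core

variable {n : ℕ} (w₀ : List (Fin n))

/-- From the identity with a constant assignment: `b^n = 0` for every `b`. -/
lemma pow_n_zero (N : ℕ) (hN : 1 ≤ N) (hnil : ∀ a : S, ppow a N = 0)
    (hn : 1 ≤ n) (hw : Valid S w₀) (hlen : n < w₀.length) (b : S) :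
    ppow b n = 0 := by
  have hfr : (List.finRange n) ≠ [] := by
    have : (List.finRange n).length = n := List.length_finRange
    intro h; rw [h] at this; simp at this; omega
  have hw0 : w₀ ≠ [] := by
    intro h; rw [h] at hlen; simp at hlen
  have h1 := hw (fun _ => b)
  rw [evalWord_const hw0, evalWord_const hfr, List.length_finRange] at h1
  have hmn : ppow b w₀.length = ppow b n := Option.some_injective _ h1
  set m := w₀.length with hm
  set d := m - n with hd
  have hd1 : 1 ≤ d := by omega
  have key : ∀ k : ℕ, ppow b (n + k * d) = ppow b n := by
    intro k
    induction k with
    | zero => simp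
    | succ k ih =>
        have h2 : n + (k+1) * d = (n + k * d) + d := by ring
        rw [h2, ppow_add b _ d (by omega) hd1, ih, ← ppow_add b n d (by omega) hd1]
        have : n + d = m := by omega
        rw [this, hmn]
  have hNd : N ≤ N * d := Nat.le_mul_of_pos_right N (by omega)
  have h3 : n + N * d = N + (n + N * d - N) := by omega
  have h4 : 1 ≤ n + N * d - N := by omega
  calc ppow b n = ppow b (n + N * d) := (key N).symm
    _ = ppow b N * ppow b (n + N * d - N) := by rw [← ppow_add b N _ hN h4, ← h3]
    _ = 0 := by rw [hnil b, zero_mul]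

lemma pow_ge_n_zero (N : ℕ) (hN : 1 ≤ N) (hnil : ∀ a : S, ppow a N = 0)
    (hn : 1 ≤ n) (hw : Valid S w₀) (hlen : n < w₀.length) (b : S) (K : ℕ) (hK : n ≤ K) :
    ppow b K = 0 := by
  rcases Nat.eq_or_lt_of_le hK with h | h
  · rw [← h]; exact pow_n_zero w₀ N hN hnil hn hw hlen b
  · have : K = n + (K - n) := by omega
    rw [this, ppow_add b n _ hn (by omega), pow_n_zero w₀ N hN hnil hn hw hlen b, zero_mul]

lemma omul_zero_mid (a b : Option S) : omul a (omul (some 0) b) = some 0 := by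
  cases a <;> cases b <;> simp [omul, zero_mul, mul_zero]

/-- The kill: a valid word containing a run `c^K` with `K ≥ n` forces the conclusion. -/
lemma kill (N : ℕ) (hN : 1 ≤ N) (hnil : ∀ a : S, ppow a N = 0)
    (hn : 1 ≤ n) (hw : Valid S w₀) (hlen : n < w₀.length)
    (X Y : List (Fin n)) (c : Fin n) (K : ℕ) (hK : n ≤ K)
    (hv : Valid S (X ++ List.replicate K c ++ Y)) :
    ∀ g : Fin n → S, evalWord g (List.finRange n) = some 0 := by
  intro g
  rw [← hv g, evalWord_append, evalWord_append,
    evalWord_replicate g c (by omega),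
    pow_ge_n_zero w₀ N hN hnil hn hw hlen (g c) K hK, omul_assoc]
  exact omul_zero_mid _ _
end Core

end Stmt5

namespace Stmt5

variable {S : Type*} [SemigroupWithZero S]

lemma first_occ {γ : Type*} {j : γ} : ∀ {w : List γ}, j ∈ w →
    ∃ D E, w = D ++ j :: E ∧ j ∉ D := by
  intro w
  induction w with
  | nil => intro h; simp at h
  | cons a t ih =>
      intro h
      by_cases ha : j = a
      · exact ⟨[], t, by rw [← ha]; rfl, by simp⟩
      · have : j ∈ t := by rcases List.mem_cons.mp h with h | h; exact absurd h ha; exact h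
        obtain ⟨D, E, hDE, hD⟩ := ih this
        exact ⟨a :: D, E, by rw [hDE]; rfl, by simp [hD, Ne.symm]; exact fun hc => ha hc⟩

lemma rep_letter {n : ℕ} (w₀ : List (Fin n)) (hlen : n < w₀.length) :
    ∃ (j : Fin n) (D G E : List (Fin n)), w₀ = D ++ j :: (G ++ j :: E) ∧ j ∉ G := by
  have hnd : ¬ w₀.Nodup := by
    intro h
    have := h.length_le_card
    rw [Fintype.card_fin] at this
    omega
  rw [List.nodup_iff_count_le_one] at hnd
  push_neg at hnd
  obtain ⟨j, hj⟩ := hnd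
  have hjm : j ∈ w₀ := by
    rw [← List.count_pos_iff]
    omega
  obtain ⟨D, R, hDR, hD⟩ := first_occ hjm
  have hcnt : j ∈ R := by
    rw [hDR, List.count_append, List.count_cons] at hj
    have hD0 : List.count j D = 0 := List.count_eq_zero_of_not_mem hD
    simp [hD0] at hj
    exact hj
  obtain ⟨G, E, hGE, hG⟩ := first_occ hcnt
  exact ⟨j, D, G, E, by rw [hDR, hGE], hG⟩

section Pump

variable {n : ℕ} {w₀ : List (Fin n)}

lemma pump_step (hn : 1 ≤ n) (hw : Valid S w₀) (hlen : n < w₀.length)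
    (W : List (Fin n)) (hWv : Valid S W) (hWl : w₀.length ≤ W.length) :
    ∃ W' : List (Fin n), Valid S W' ∧ W.length + 1 ≤ W'.length := by
  obtain ⟨j, D, G, E, hdec, -⟩ := rep_letter w₀ hlen
  have hjn : j.val ≤ n - 1 := by omega
  obtain ⟨P, R, hPR, hP⟩ := split_left W j.val (by omega)
  obtain ⟨Mid, Q, hMQ, hQ⟩ := split_right R (n - 1 - j.val) (by
    have : R.length = W.length - j.val := by
      have := congrArg List.length hPR
      simp at this
      omega
    omega)
  have hMid : Mid.length = W.length - (n-1) := by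
    have h1 := congrArg List.length hPR
    have h2 := congrArg List.length hMQ
    simp at h1 h2
    omega
  have hMne : Mid ≠ [] := by
    intro h
    rw [h] at hMid
    simp at hMid
    omega
  set L : List (List (Fin n)) := P.map (fun t => [t]) ++ [Mid] ++ Q.map (fun t => [t]) with hL
  have hLlen : L.length = n := by simp [hL, hP, hQ]; omega
  have hLne : ∀ b ∈ L, b ≠ [] := by
    intro b hb
    simp only [hL, List.mem_append] at hb
    rcases hb with (hb | hb) | hb
    · exact map_singleton_ne P b hb
    · simp at hb; rw [hb]; exact hMne
    · exact map_singleton_ne Q b hb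
  have hflat : (List.finRange n).flatMap (BF L) = W := by
    rw [BF_flatten L hLlen, hL]
    rw [List.flatten_append, List.flatten_append, map_singleton_flatten, map_singleton_flatten]
    simp
    rw [← hMQ, ← hPR]
  have hBj : BF L j = Mid := BF_at (P.map (fun t => [t])) Mid (Q.map (fun t => [t])) j
    (by simp [hP])
  have hsub : Valid S ([] ++ w₀.flatMap (BF L) ++ []) := by
    apply subst w₀ hw (BF L) (BF_ne_nil L hLlen hLne)
    rw [List.nil_append, List.append_nil, hflat]
    exact hWv
  rw [List.nil_append, List.append_nil] at hsub
  refine ⟨w₀.flatMap (BF L), hsub, ?_⟩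
  rw [hdec]
  rw [List.flatMap_append, List.flatMap_cons, List.flatMap_append, List.flatMap_cons, hBj]
  simp only [List.length_append]
  have hD' := flatMap_length_ge (BF L) (BF_ne_nil L hLlen hLne) D
  have hG' := flatMap_length_ge (BF L) (BF_ne_nil L hLlen hLne) G
  have hE' := flatMap_length_ge (BF L) (BF_ne_nil L hLlen hLne) E
  have hlw : w₀.length = D.length + 1 + (G.length + 1 + E.length) := by
    have := congrArg List.length hdec
    simp at this
    omega
  have hMl : W.length - (n-1) ≥ W.length - n + 1 := by omega
  omega

lemma pump (hn : 1 ≤ n) (hw : Valid S w₀) (hlen : n < w₀.length) :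
    ∀ k, ∃ W : List (Fin n), Valid S W ∧ w₀.length ≤ W.length ∧ k ≤ W.length := by
  intro k
  induction k with
  | zero => exact ⟨w₀, hw, le_rfl, by omega⟩
  | succ k ih =>
      obtain ⟨W, hWv, hWl, hWk⟩ := ih
      by_cases h : k + 1 ≤ W.length
      · exact ⟨W, hWv, hWl, h⟩
      · obtain ⟨W', hW'v, hW'l⟩ := pump_step hn hw hlen W hWv hWl
        exact ⟨W', hW'v, by omega, by omega⟩

end Pump

end Stmt5

namespace Stmt5

variable {S : Type*} [SemigroupWithZero S]

section Copy

variable {n : ℕ} {w₀ : List (Fin n)}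

/-- Length of blocks at non-payload slots in the fat tiling. -/
lemma BF_fat_length (a : ℕ) (han : a ≤ n - 1) (hn : 1 ≤ n)
    (X₂ Y₁ : List (Fin n)) (Q : List (Fin n))
    (hX₂ : X₂.length = a * n) (hY₁ : Y₁.length = (n - 1 - a) * n)
    (i : Fin n) (hi : i.val ≠ a) :
    (BF (chunks n a X₂ ++ [Q] ++ chunks n (n - 1 - a) Y₁) i).length = n := by
  rcases Nat.lt_or_ge i.val a with h | h
  · rw [BF, List.append_assoc, List.getD_append _ _ _ _ (by simp [chunks_length]; omega),
      List.getD_eq_getElem _ _ (by simp [chunks_length]; omega)]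
    exact chunks_mem_length hX₂ _ (List.getElem_mem _)
  · have h' : a < i.val := by omega
    rw [BF, List.getD_append_right _ _ _ _ (by simp [chunks_length]; omega),
      List.getD_eq_getElem _ _ (by simp [chunks_length]; have := i.isLt; omega)]
    exact chunks_mem_length hY₁ _ (List.getElem_mem _)

lemma copy (hn : 1 ≤ n) (hw : Valid S w₀)
    (j c : Fin n) (D G E : List (Fin n)) (hdec : w₀ = D ++ j :: (G ++ j :: E)) (hjG : j ∉ G)
    (X Y : List (Fin n)) (host : Valid S (X ++ [c] ++ Y))
    (hX : n * n ≤ X.length) (hY : n * n ≤ Y.length) :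
    ∃ X' Y' M : List (Fin n), Valid S (X' ++ [c] ++ M ++ [c] ++ Y') ∧
      (G = [] → M = []) ∧ (G ≠ [] → n ≤ M.length) ∧
      X.length ≤ X'.length + n * n ∧ Y.length ≤ Y'.length + n * n := by
  set a := j.val with ha
  have han : a ≤ n - 1 := by have := j.isLt; omega
  obtain ⟨X₁, X₂, hXs, hX₂⟩ := split_right X (a * n)
    (le_trans (by apply Nat.mul_le_mul_right; omega) hX)
  obtain ⟨Y₁, Y₂, hYs, hY₁⟩ := split_left Y ((n - 1 - a) * n)
    (le_trans (by apply Nat.mul_le_mul_right; omega) hY)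
  set L : List (List (Fin n)) := chunks n a X₂ ++ [[c]] ++ chunks n (n - 1 - a) Y₁ with hL
  have hLlen : L.length = n := by simp [hL, chunks_length]; omega
  have hLne : ∀ b ∈ L, b ≠ [] := by
    intro b hb
    simp only [hL, List.mem_append] at hb
    rcases hb with (hb | hb) | hb
    · exact chunks_mem_ne hX₂ hn b hb
    · simp at hb; rw [hb]; simp
    · exact chunks_mem_ne hY₁ hn b hb
  have hBne := BF_ne_nil L hLlen hLne
  have hflat : (List.finRange n).flatMap (BF L) = X₂ ++ [c] ++ Y₁ := by
    rw [BF_flatten L hLlen, hL, List.flatten_append, List.flatten_append,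
      chunks_flatten hX₂, chunks_flatten hY₁]
    simp
  have hBj : BF L j = [c] := BF_at _ _ _ j (by simp [chunks_length]; rfl)
  have hhost2 : Valid S ((X₁ ++ (List.finRange n).flatMap (BF L)) ++ Y₂) := by
    rw [hflat]
    have he : (X₁ ++ (X₂ ++ [c] ++ Y₁)) ++ Y₂ = X ++ [c] ++ Y := by
      rw [hXs, hYs]; simp [List.append_assoc]
    rw [List.append_assoc X₁] at he ⊢
    rw [he]
    exact host
  have hsub : Valid S (X₁ ++ w₀.flatMap (BF L) ++ Y₂) :=
    subst w₀ hw (BF L) hBne X₁ Y₂ hhost2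
  rw [hdec, List.flatMap_append, List.flatMap_cons, List.flatMap_append, List.flatMap_cons,
    hBj] at hsub
  refine ⟨X₁ ++ D.flatMap (BF L), E.flatMap (BF L) ++ Y₂, G.flatMap (BF L), ?_, ?_, ?_, ?_, ?_⟩
  · have he : X₁ ++ (D.flatMap (BF L) ++ ([c] ++ (G.flatMap (BF L) ++ ([c] ++ E.flatMap (BF L))))) ++ Y₂
        = (X₁ ++ D.flatMap (BF L)) ++ [c] ++ G.flatMap (BF L) ++ [c] ++ (E.flatMap (BF L) ++ Y₂) := by
      simp [List.append_assoc]
    rw [← he]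
    exact hsub
  · intro hG; rw [hG]; rfl
  · intro hG
    cases G with
    | nil => exact absurd rfl hG
    | cons t G' =>
        rw [List.flatMap_cons, List.length_append]
        have ht : t ≠ j := by intro h; rw [h] at hjG; exact hjG (by simp)
        have : (BF L t).length = n := by
          apply BF_fat_length a han hn X₂ Y₁ [c] hX₂ hY₁ t
          intro hc
          exact ht (Fin.ext hc)
        omega
  · have h1 : X₁.length + X₂.length = X.length := by
      have := congrArg List.length hXs; simp at this; omega
    simp only [List.length_append]
    have : a * n ≤ n * n := by
      calc a * n ≤ (n-1) * n := Nat.mul_le_mul_right n han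
        _ ≤ n * n := Nat.mul_le_mul_right n (by omega)
    omega
  · have h1 : Y₁.length + Y₂.length = Y.length := by
      have := congrArg List.length hYs; simp at this; omega
    simp only [List.length_append]
    have : (n - 1 - a) * n ≤ n * n := by
      apply Nat.mul_le_mul_right n; omega
    omega

end Copy

end Stmt5

namespace Stmt5

variable {S : Type*} [SemigroupWithZero S]

lemma BF_at' {n : ℕ} (L L₁ L₂ : List (List (Fin n))) (Q : List (Fin n)) (i : Fin n)
    (hL : L = L₁ ++ [Q] ++ L₂) (h : i.val = L₁.length) : BF L i = Q := by
  rw [hL]; exact BF_at L₁ Q L₂ i h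

section MergeFib

variable {n : ℕ} {w₀ : List (Fin n)}

/-- MERGE: given a pattern adjacency of two letters at distance ≥ 2 and a valid word
containing two separated copies of `c`, produce a valid word with adjacent `c`s. -/
lemma merge0 (hn : 1 ≤ n) (hw : Valid S w₀)
    (lo hi c : Fin n) (hlh : lo.val + 2 ≤ hi.val)
    (hadj : (∃ D E : List (Fin n), w₀ = D ++ lo :: hi :: E) ∨
            (∃ D E : List (Fin n), w₀ = D ++ hi :: lo :: E))
    (X M Y : List (Fin n)) (host : Valid S (X ++ [c] ++ M ++ [c] ++ Y))
    (hM : n ≤ M.length) (hX : n ≤ X.length) (hY : n ≤ Y.length) :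
    ∃ D' E' : List (Fin n), Valid S (D' ++ c :: c :: E') := by
  have hhin : hi.val < n := hi.isLt
  set Δ := hi.val - lo.val with hΔ
  obtain ⟨X₁, X₂, hXs, hX₂⟩ := split_right X lo.val (by omega)
  obtain ⟨Y₁, Y₂, hYs, hY₁⟩ := split_left Y (n - 1 - hi.val) (by omega)
  obtain ⟨M₁, M₂, hMs, hM₁⟩ := split_left M (Δ - 2) (by omega)
  have hM₂ : M₂ ≠ [] := by
    have := congrArg List.length hMs
    simp at this
    intro h; rw [h] at this; simp at this; omega
  set L : List (List (Fin n)) :=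
    X₂.map (fun t => [t]) ++ [[c]] ++ (M₁.map (fun t => [t]) ++ [M₂]) ++ [[c]]
      ++ Y₁.map (fun t => [t]) with hL
  have hLlen : L.length = n := by simp [hL, hX₂, hY₁, hM₁]; omega
  have hLne : ∀ b ∈ L, b ≠ [] := by
    intro b hb
    simp only [hL, List.mem_append] at hb
    rcases hb with ((((hb | hb) | hb) | hb) | hb)
    · exact map_singleton_ne _ b hb
    · simp at hb; rw [hb]; simp
    · rcases hb with hb | hb
      · exact map_singleton_ne _ b hb
      · simp at hb; rw [hb]; exact hM₂
    · simp at hb; rw [hb]; simp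
    · exact map_singleton_ne _ b hb
  have hBne := BF_ne_nil L hLlen hLne
  have hBlo : BF L lo = [c] := BF_at' L (X₂.map (fun t => [t]))
      ((M₁.map (fun t => [t]) ++ [M₂]) ++ [[c]] ++ Y₁.map (fun t => [t])) [c] lo
      (by rw [hL]; all_goals simp [List.append_assoc]) (by simp [hX₂]; all_goals omega)
  have hBhi : BF L hi = [c] := BF_at' L
      (X₂.map (fun t => [t]) ++ [[c]] ++ (M₁.map (fun t => [t]) ++ [M₂]))
      (Y₁.map (fun t => [t])) [c] hi
      (by rw [hL]; all_goals simp [List.append_assoc]) (by simp [hX₂, hM₁]; all_goals omega)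
  have hflat : (List.finRange n).flatMap (BF L) = X₂ ++ [c] ++ M ++ [c] ++ Y₁ := by
    rw [BF_flatten L hLlen, hL]
    simp only [List.flatten_append, map_singleton_flatten, List.flatten_cons,
      List.flatten_nil, List.append_nil]
    rw [hMs]
  have hhost2 : Valid S ((X₁ ++ (List.finRange n).flatMap (BF L)) ++ Y₂) := by
    rw [hflat]
    have he : (X₁ ++ (X₂ ++ [c] ++ M ++ [c] ++ Y₁)) ++ Y₂ = X ++ [c] ++ M ++ [c] ++ Y := by
      rw [hXs, hYs]; simp [List.append_assoc]
    rw [List.append_assoc X₁] at he ⊢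
    rw [he]
    exact host
  have hsub : Valid S (X₁ ++ w₀.flatMap (BF L) ++ Y₂) :=
    subst w₀ hw (BF L) hBne X₁ Y₂ hhost2
  rcases hadj with ⟨D, E, hdec⟩ | ⟨D, E, hdec⟩
  · rw [hdec, List.flatMap_append, List.flatMap_cons, List.flatMap_cons, hBlo, hBhi] at hsub
    refine ⟨X₁ ++ D.flatMap (BF L), E.flatMap (BF L) ++ Y₂, ?_⟩
    have he : X₁ ++ (D.flatMap (BF L) ++ ([c] ++ ([c] ++ E.flatMap (BF L)))) ++ Y₂
        = (X₁ ++ D.flatMap (BF L)) ++ c :: c :: (E.flatMap (BF L) ++ Y₂) := by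
      simp [List.append_assoc]
    rw [← he]
    exact hsub
  · rw [hdec, List.flatMap_append, List.flatMap_cons, List.flatMap_cons, hBlo, hBhi] at hsub
    refine ⟨X₁ ++ D.flatMap (BF L), E.flatMap (BF L) ++ Y₂, ?_⟩
    have he : X₁ ++ (D.flatMap (BF L) ++ ([c] ++ ([c] ++ E.flatMap (BF L)))) ++ Y₂
        = (X₁ ++ D.flatMap (BF L)) ++ c :: c :: (E.flatMap (BF L) ++ Y₂) := by
      simp [List.append_assoc]
    rw [← he]
    exact hsub

/-- FIB: given a pattern `x y x` with `|x−y| = 1` and a valid word containing two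
separated copies of `c`, produce a valid word with adjacent `c`s. -/
lemma fib0 (hn : 1 ≤ n) (hw : Valid S w₀)
    (x y c : Fin n) (D E : List (Fin n)) (hdec : w₀ = D ++ x :: y :: x :: E)
    (hxy : x.val + 1 = y.val ∨ y.val + 1 = x.val)
    (X M Y : List (Fin n)) (host : Valid S (X ++ [c] ++ M ++ [c] ++ Y))
    (hX : n ≤ X.length) (hY : n ≤ Y.length) :
    ∃ D' E' : List (Fin n), Valid S (D' ++ c :: c :: E') := by
  have hxn : x.val < n := x.isLt
  have hyn : y.val < n := y.isLt
  set lov : ℕ := min x.val y.val with hlov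
  have hlo2 : lov ≤ n - 2 := by omega
  obtain ⟨X₁, X₂, hXs, hX₂⟩ := split_right X lov (by omega)
  obtain ⟨Y₁, Y₂, hYs, hY₁⟩ := split_left Y (n - 2 - lov) (by omega)
  set L : List (List (Fin n)) :=
    X₂.map (fun t => [t]) ++ [[c] ++ M] ++ [[c]] ++ Y₁.map (fun t => [t]) with hL
  have hLlen : L.length = n := by simp [hL, hX₂, hY₁]; omega
  have hLne : ∀ b ∈ L, b ≠ [] := by
    intro b hb
    simp only [hL, List.mem_append] at hb
    rcases hb with ((hb | hb) | hb) | hb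
    · exact map_singleton_ne _ b hb
    · simp at hb; rw [hb]; simp
    · simp at hb; rw [hb]; simp
    · exact map_singleton_ne _ b hb
  have hBne := BF_ne_nil L hLlen hLne
  have hBlo : ∀ i : Fin n, i.val = lov → BF L i = [c] ++ M := by
    intro i hi
    exact BF_at' L (X₂.map (fun t => [t])) ([[c]] ++ Y₁.map (fun t => [t])) ([c] ++ M) i
      (by rw [hL]; all_goals simp [List.append_assoc]) (by simp [hX₂, hi]; all_goals omega)
  have hBhi : ∀ i : Fin n, i.val = lov + 1 → BF L i = [c] := by
    intro i hi
    exact BF_at' L (X₂.map (fun t => [t]) ++ [[c] ++ M]) (Y₁.map (fun t => [t])) [c] i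
      (by rw [hL]; all_goals simp [List.append_assoc]) (by simp [hX₂, hi]; all_goals omega)
  have hflat : (List.finRange n).flatMap (BF L) = X₂ ++ [c] ++ M ++ [c] ++ Y₁ := by
    rw [BF_flatten L hLlen, hL]
    simp only [List.flatten_append, map_singleton_flatten, List.flatten_cons,
      List.flatten_nil, List.append_nil]
    simp [List.append_assoc]
  have hhost2 : Valid S ((X₁ ++ (List.finRange n).flatMap (BF L)) ++ Y₂) := by
    rw [hflat]
    have he : (X₁ ++ (X₂ ++ [c] ++ M ++ [c] ++ Y₁)) ++ Y₂ = X ++ [c] ++ M ++ [c] ++ Y := by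
      rw [hXs, hYs]; simp [List.append_assoc]
    rw [List.append_assoc X₁] at he ⊢
    rw [he]
    exact host
  have hsub : Valid S (X₁ ++ w₀.flatMap (BF L) ++ Y₂) :=
    subst w₀ hw (BF L) hBne X₁ Y₂ hhost2
  rw [hdec, List.flatMap_append, List.flatMap_cons, List.flatMap_cons, List.flatMap_cons]
    at hsub
  rcases hxy with hc | hc
  · -- x is low, y = x+1 : B x = [c] ++ M, B y = [c]
    rw [hBlo x (by omega), hBhi y (by omega)] at hsub
    refine ⟨X₁ ++ (D.flatMap (BF L) ++ ([c] ++ M)), M ++ E.flatMap (BF L) ++ Y₂, ?_⟩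
    have he : X₁ ++ (D.flatMap (BF L) ++ (([c] ++ M) ++ ([c] ++ (([c] ++ M) ++ E.flatMap (BF L))))) ++ Y₂
        = (X₁ ++ (D.flatMap (BF L) ++ ([c] ++ M))) ++ c :: c :: (M ++ E.flatMap (BF L) ++ Y₂) := by
      simp [List.append_assoc]
    rw [← he]
    exact hsub
  · -- y is low : B y = [c] ++ M, B x = [c]
    rw [hBlo y (by omega), hBhi x (by omega)] at hsub
    refine ⟨X₁ ++ D.flatMap (BF L), M ++ ([c] ++ E.flatMap (BF L)) ++ Y₂, ?_⟩
    have he : X₁ ++ (D.flatMap (BF L) ++ ([c] ++ (([c] ++ M) ++ ([c] ++ E.flatMap (BF L))))) ++ Y₂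
        = (X₁ ++ D.flatMap (BF L)) ++ c :: c :: (M ++ ([c] ++ E.flatMap (BF L)) ++ Y₂) := by
      simp [List.append_assoc]
    rw [← he]
    exact hsub

end MergeFib

end Stmt5

namespace Stmt5

variable {S : Type*} [SemigroupWithZero S]

section Double

variable {n : ℕ} {w₀ : List (Fin n)}

lemma double_step (hn : 1 ≤ n) (c : Fin n) (Dh Eh : List (Fin n))
    (hp : Valid S (Dh ++ c :: c :: Eh))
    (R : ℕ) (hR : 1 ≤ R) (X Y : List (Fin n))
    (host : Valid S (X ++ List.replicate R c ++ Y))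
    (hX : n ≤ X.length) (hY : n ≤ Y.length) :
    ∃ X' Y' : List (Fin n), Valid S (X' ++ List.replicate (2 * R) c ++ Y') ∧
      X.length ≤ X'.length + n ∧ Y.length ≤ Y'.length + n := by
  have hcn : c.val < n := c.isLt
  obtain ⟨X₁, X₂, hXs, hX₂⟩ := split_right X c.val (by omega)
  obtain ⟨Y₁, Y₂, hYs, hY₁⟩ := split_left Y (n - 1 - c.val) (by omega)
  set L : List (List (Fin n)) :=
    X₂.map (fun t => [t]) ++ [List.replicate R c] ++ Y₁.map (fun t => [t]) with hL
  have hLlen : L.length = n := by simp [hL, hX₂, hY₁]; omega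
  have hLne : ∀ b ∈ L, b ≠ [] := by
    intro b hb
    simp only [hL, List.mem_append] at hb
    rcases hb with (hb | hb) | hb
    · exact map_singleton_ne _ b hb
    · simp at hb; rw [hb]; simp; omega
    · exact map_singleton_ne _ b hb
  have hBne := BF_ne_nil L hLlen hLne
  have hBc : BF L c = List.replicate R c :=
    BF_at _ _ _ c (by simp [hX₂])
  have hflat : (List.finRange n).flatMap (BF L) = X₂ ++ List.replicate R c ++ Y₁ := by
    rw [BF_flatten L hLlen, hL]
    simp only [List.flatten_append, map_singleton_flatten, List.flatten_cons,
      List.flatten_nil, List.append_nil]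
  have hhost2 : Valid S ((X₁ ++ (List.finRange n).flatMap (BF L)) ++ Y₂) := by
    rw [hflat]
    have he : (X₁ ++ (X₂ ++ List.replicate R c ++ Y₁)) ++ Y₂
        = X ++ List.replicate R c ++ Y := by
      rw [hXs, hYs]; simp [List.append_assoc]
    rw [List.append_assoc X₁] at he ⊢
    rw [he]
    exact host
  have hsub : Valid S (X₁ ++ (Dh ++ c :: c :: Eh).flatMap (BF L) ++ Y₂) :=
    subst _ hp (BF L) hBne X₁ Y₂ hhost2
  rw [List.flatMap_append, List.flatMap_cons, List.flatMap_cons, hBc] at hsub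
  refine ⟨X₁ ++ Dh.flatMap (BF L), Eh.flatMap (BF L) ++ Y₂, ?_, ?_, ?_⟩
  · have he : X₁ ++ (Dh.flatMap (BF L) ++ (List.replicate R c ++ (List.replicate R c
        ++ Eh.flatMap (BF L)))) ++ Y₂
        = (X₁ ++ Dh.flatMap (BF L)) ++ List.replicate (2 * R) c
          ++ (Eh.flatMap (BF L) ++ Y₂) := by
      rw [show 2 * R = R + R by ring, List.replicate_add]
      simp only [List.append_assoc]
    rw [← he]
    exact hsub
  · have h1 := congrArg List.length hXs
    simp at h1
    simp only [List.length_append]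
    omega
  · have h1 := congrArg List.length hYs
    simp at h1
    simp only [List.length_append]
    omega

lemma doubling (hn : 1 ≤ n) (c : Fin n) (Dh Eh : List (Fin n))
    (hp : Valid S (Dh ++ c :: c :: Eh))
    (X₀ Y₀ : List (Fin n)) (host : Valid S (X₀ ++ [c] ++ Y₀))
    (hX : n * (n + 1) ≤ X₀.length) (hY : n * (n + 1) ≤ Y₀.length) :
    ∀ t, t ≤ n → ∃ X Y : List (Fin n),
      Valid S (X ++ List.replicate (2 ^ t) c ++ Y) ∧
      n * (n + 1) ≤ X.length + n * t ∧ n * (n + 1) ≤ Y.length + n * t := by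
  intro t
  induction t with
  | zero =>
      intro _
      exact ⟨X₀, Y₀, by simpa using host, by simpa using hX, by simpa using hY⟩
  | succ t ih =>
      intro ht
      obtain ⟨X, Y, hv, hXl, hYl⟩ := ih (by omega)
      have hXn : n ≤ X.length := by
        have : n * t ≤ n * (n - 1) := Nat.mul_le_mul_left n (by omega)
        have h2 : n * (n+1) = n * (n-1) + 2 * n := by
          have : n - 1 + 2 = n + 1 := by omega
          calc n * (n+1) = n * (n - 1 + 2) := by rw [this]
            _ = n * (n-1) + 2 * n := by ring
        omega
      have hYn : n ≤ Y.length := by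
        have : n * t ≤ n * (n - 1) := Nat.mul_le_mul_left n (by omega)
        have h2 : n * (n+1) = n * (n-1) + 2 * n := by
          have : n - 1 + 2 = n + 1 := by omega
          calc n * (n+1) = n * (n - 1 + 2) := by rw [this]
            _ = n * (n-1) + 2 * n := by ring
        omega
      obtain ⟨X', Y', hv', hX', hY'⟩ :=
        double_step hn c Dh Eh hp (2 ^ t) (Nat.one_le_two_pow) X Y hv hXn hYn
      have hnt : n * (t + 1) = n * t + n := by ring
      refine ⟨X', Y', ?_, by omega, by omega⟩
      rw [show (2 : ℕ) ^ (t + 1) = 2 * 2 ^ t by ring]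
      exact hv'

end Double

section Finders

variable {γ : Type*}

lemma find_pair (P : γ → γ → Prop) : ∀ (w : List γ),
    (∃ D a b E, w = D ++ a :: b :: E ∧ P a b) ∨
    (∀ D a b E, w = D ++ a :: b :: E → ¬ P a b) := by
  intro w
  induction w with
  | nil =>
      right
      intro D a b E h
      have := congrArg List.length h
      simp at this
  | cons h t ih =>
      rcases ih with ⟨D, a, b, E, hdec, hP⟩ | hno
      · exact Or.inl ⟨h :: D, a, b, E, by rw [hdec]; rfl, hP⟩
      · cases t with
        | nil =>
            right
            intro D a b E hEq
            have := congrArg List.length hEq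
            simp at this
            omega
        | cons b t' =>
            by_cases hP : P h b
            · exact Or.inl ⟨[], h, b, t', rfl, hP⟩
            · right
              intro D a b' E hEq
              cases D with
              | nil =>
                  simp at hEq
                  obtain ⟨rfl, rfl, rfl⟩ := hEq
                  exact hP
              | cons d D' =>
                  rw [List.cons_append] at hEq
                  injection hEq with h1 h2
                  exact hno D' a b' E h2

lemma find_triple (P : γ → γ → γ → Prop) : ∀ (w : List γ),
    (∃ D a b c E, w = D ++ a :: b :: c :: E ∧ P a b c) ∨
    (∀ D a b c E, w = D ++ a :: b :: c :: E → ¬ P a b c) := by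
  intro w
  induction w with
  | nil =>
      right
      intro D a b c E h
      have := congrArg List.length h
      simp at this
  | cons h t ih =>
      rcases ih with ⟨D, a, b, c, E, hdec, hP⟩ | hno
      · exact Or.inl ⟨h :: D, a, b, c, E, by rw [hdec]; rfl, hP⟩
      · cases t with
        | nil =>
            right
            intro D a b c E hEq
            have := congrArg List.length hEq
            simp at this
            omega
        | cons b t' =>
            cases t' with
            | nil =>
                right
                intro D a b' c E hEq
                have := congrArg List.length hEq
                simp at this
                omega
            | cons c t'' =>
                by_cases hP : P h b c
                · exact Or.inl ⟨[], h, b, c, t'', rfl, hP⟩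
                · right
                  intro D a b' c' E hEq
                  cases D with
                  | nil =>
                      simp at hEq
                      obtain ⟨rfl, rfl, rfl, rfl⟩ := hEq
                      exact hP
                  | cons d D' =>
                      rw [List.cons_append] at hEq
                      injection hEq with h1 h2
                      exact hno D' a b' c' E h2

end Finders

end Stmt5

namespace Stmt5

variable {S : Type*} [SemigroupWithZero S]

lemma split_at_pair {γ : Type*} (w : List γ) (i : ℕ) (h : i + 1 < w.length) :
    w = w.take i ++ w[i]'(by omega) :: w[i+1] :: w.drop (i+2) := by
  have h0 : w.drop i = w[i]'(by omega) :: w.drop (i+1) :=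
    (List.getElem_cons_drop (as := w) (i := i) (by omega)).symm
  have h1 : w.drop (i+1) = w[i+1]'h :: w.drop (i+2) :=
    (List.getElem_cons_drop (as := w) (i := i+1) h).symm
  conv_lhs => rw [← List.take_append_drop i w, h0, h1]

lemma split_at_triple {γ : Type*} (w : List γ) (i : ℕ) (h : i + 2 < w.length) :
    w = w.take i ++ w[i]'(by omega) :: w[i+1]'(by omega) :: w[i+2] :: w.drop (i+3) := by
  have h0 : w.drop i = w[i]'(by omega) :: w.drop (i+1) :=
    (List.getElem_cons_drop (as := w) (i := i) (by omega)).symm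
  have h1 : w.drop (i+1) = w[i+1]'(by omega) :: w.drop (i+2) :=
    (List.getElem_cons_drop (as := w) (i := i+1) (by omega)).symm
  have h2 : w.drop (i+2) = w[i+2]'h :: w.drop (i+3) :=
    (List.getElem_cons_drop (as := w) (i := i+2) h).symm
  conv_lhs => rw [← List.take_append_drop i w, h0, h1, h2]

lemma no_pattern_contra {n : ℕ} {w₀ : List (Fin n)} (hn : 1 ≤ n) (hlen : n < w₀.length)
    (h1 : ∀ (D : List (Fin n)) (a b : Fin n) (E : List (Fin n)),
      w₀ = D ++ a :: b :: E → ¬ (a = b))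
    (h2 : ∀ (D : List (Fin n)) (a b : Fin n) (E : List (Fin n)),
      w₀ = D ++ a :: b :: E → ¬ (a.val + 2 ≤ b.val ∨ b.val + 2 ≤ a.val))
    (h3 : ∀ (D : List (Fin n)) (a b c : Fin n) (E : List (Fin n)),
      w₀ = D ++ a :: b :: c :: E → ¬ (a = c)) : False := by
  have hstep : ∀ i, (hi : i + 1 < w₀.length) →
      ((w₀[i+1]'hi).val = (w₀[i]'(by omega)).val + 1 ∨
       (w₀[i]'(by omega)).val = (w₀[i+1]'hi).val + 1) := by
    intro i hi
    have hs := split_at_pair w₀ i hi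
    have hne := h1 _ _ _ _ hs
    have hnl := h2 _ _ _ _ hs
    have hv : (w₀[i]'(by omega)).val ≠ (w₀[i+1]'hi).val := fun hc => hne (Fin.ext hc)
    omega
  have hnb : ∀ i, (hi : i + 2 < w₀.length) →
      (w₀[i]'(by omega)).val ≠ (w₀[i+2]'hi).val := by
    intro i hi hc
    exact h3 _ _ _ _ _ (split_at_triple w₀ i hi) (Fin.ext hc)
  have hm2 : 1 + 1 < w₀.length → True := fun _ => trivial
  rcases hstep 0 (by omega) with hup | hdn
  · have hmono : ∀ i, (hi : i + 1 < w₀.length) →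
        (w₀[i+1]'hi).val = (w₀[i]'(by omega)).val + 1 := by
      intro i
      induction i with
      | zero => intro hi; exact hup
      | succ k ih =>
          intro hk
          have ihk := ih (by omega)
          rcases hstep (k+1) hk with h | h
          · exact h
          · have hb : (w₀[k+1+1]'hk).val = (w₀[k+2]'(by omega)).val := rfl
            exact absurd (by omega : (w₀[k]'(by omega)).val = (w₀[k+2]'(by omega)).val)
              (hnb k (by omega))
    have hval : ∀ i, (hi : i < w₀.length) → (w₀[i]'hi).val = (w₀[0]'(by omega)).val + i := by
      intro i
      induction i with
      | zero => intro _; rfl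
      | succ k ih =>
          intro hk
          have := hmono k hk
          have := ih (by omega)
          omega
    have h1 := hval n (by omega)
    have h2 := (w₀[n]'(by omega)).isLt
    omega
  · have hmono : ∀ i, (hi : i + 1 < w₀.length) →
        (w₀[i]'(by omega)).val = (w₀[i+1]'hi).val + 1 := by
      intro i
      induction i with
      | zero => intro hi; exact hdn
      | succ k ih =>
          intro hk
          have ihk := ih (by omega)
          rcases hstep (k+1) hk with h | h
          · have hb : (w₀[k+1+1]'hk).val = (w₀[k+2]'(by omega)).val := rfl
            exact absurd (by omega : (w₀[k]'(by omega)).val = (w₀[k+2]'(by omega)).val)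
              (hnb k (by omega))
          · exact h
    have hval : ∀ i, (hi : i < w₀.length) → (w₀[0]'(by omega)).val = (w₀[i]'hi).val + i := by
      intro i
      induction i with
      | zero => intro _; rfl
      | succ k ih =>
          intro hk
          have := hmono k hk
          have := ih (by omega)
          omega
    have h1 := hval n (by omega)
    have h2 := (w₀[0]'(by omega)).isLt
    omega

end Stmt5

namespace Stmt5

variable {S : Type*} [SemigroupWithZero S]

theorem core (N : ℕ) (hN : 1 ≤ N) (hnil : ∀ a : S, ppow a N = 0)
    {n : ℕ} (hn : 1 ≤ n) (w₀ : List (Fin n)) (hw : Valid S w₀) (hlen : n < w₀.length) :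
    ∀ g : Fin n → S, evalWord g (List.finRange n) = some 0 := by
  have hn2 : n ≤ n * n := Nat.le_mul_of_pos_right n (by omega)
  have hn3 : n ≤ n * (n + 1) := Nat.le_mul_of_pos_right n (by omega)
  set Big := n * (n + 1) + n * n + n with hBig
  -- a long valid word, with a distinguished middle letter c
  obtain ⟨W, hWv, hWm, hWk⟩ := pump hn hw hlen (2 * Big + 1)
  obtain ⟨X₀, R, hXR, hX₀⟩ := split_left W Big (by omega)
  have hRlen : R.length = W.length - Big := by
    have := congrArg List.length hXR; simp at this; omega
  cases R with
  | nil => simp at hRlen; omega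
  | cons c Y₀ =>
  have hY₀ : Big ≤ Y₀.length := by
    simp at hRlen; omega
  have host0 : Valid S (X₀ ++ [c] ++ Y₀) := by
    have he : X₀ ++ [c] ++ Y₀ = W := by rw [hXR]; simp
    rw [he]; exact hWv
  -- the common finishing move: doubling + kill
  have finish : ∀ (Dh Eh : List (Fin n)), Valid S (Dh ++ c :: c :: Eh) →
      ∀ g : Fin n → S, evalWord g (List.finRange n) = some 0 := by
    intro Dh Eh hcc
    obtain ⟨X, Y, hv, -, -⟩ := doubling hn c Dh Eh hcc X₀ Y₀ host0 (by omega) (by omega) n le_rfl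
    exact kill w₀ N hN hnil hn hw hlen X Y c (2 ^ n) (Nat.lt_two_pow_self (n := n)).le hv
  -- case (i): an adjacent equal pair in w₀
  rcases find_pair (fun a b : Fin n => a = b) w₀ with ⟨D, a, b, E, hdec, hab⟩ | hno1
  · subst hab
    obtain ⟨X', Y', M, hv, hM0, -, -, -⟩ := copy hn hw a c D [] E
      (by rw [hdec]; rfl) (by simp) X₀ Y₀ host0 (by omega) (by omega)
    rw [hM0 rfl] at hv
    have he : X' ++ [c] ++ [] ++ [c] ++ Y' = X' ++ c :: c :: Y' := by simp
    rw [he] at hv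
    exact finish X' Y' hv
  -- otherwise: copy a `c` using the repeated letter of w₀
  obtain ⟨j, Dr, Gr, Er, hrdec, hrG⟩ := rep_letter w₀ hlen
  have hGr : Gr ≠ [] := by
    intro h
    rw [h] at hrdec
    exact hno1 Dr j j Er (by rw [hrdec]; rfl) rfl
  obtain ⟨X', Y', M, hv, -, hMn, hXb, hYb⟩ := copy hn hw j c Dr Gr Er hrdec hrG
    X₀ Y₀ host0 (by omega) (by omega)
  have hM := hMn hGr
  have hX' : n ≤ X'.length := by omega
  have hY' : n ≤ Y'.length := by omega
  -- case (ii): a long adjacency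
  rcases find_pair (fun a b : Fin n => a.val + 2 ≤ b.val ∨ b.val + 2 ≤ a.val) w₀ with
    ⟨D, p, q, E, hdec, hlong⟩ | hno2
  · rcases hlong with h | h
    · obtain ⟨Dh, Eh, hcc⟩ := merge0 hn hw p q c h (Or.inl ⟨D, E, hdec⟩) X' M Y' hv hM hX' hY'
      exact finish Dh Eh hcc
    · obtain ⟨Dh, Eh, hcc⟩ := merge0 hn hw q p c h (Or.inr ⟨D, E, hdec⟩) X' M Y' hv hM hX' hY'
      exact finish Dh Eh hcc
  -- case (iii): an x y x pattern
  rcases find_triple (fun a _ c' : Fin n => a = c') w₀ with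
    ⟨D, x, y, x', E, hdec, hxx⟩ | hno3
  · subst hxx
    have hne := hno1 D x y (x :: E) (by rw [hdec])
    have hnl := hno2 D x y (x :: E) (by rw [hdec])
    have hvne : x.val ≠ y.val := fun hc => hne (Fin.ext hc)
    have hxy : x.val + 1 = y.val ∨ y.val + 1 = x.val := by omega
    obtain ⟨Dh, Eh, hcc⟩ := fib0 hn hw x y c D E hdec hxy X' M Y' hv hX' hY'
    exact finish Dh Eh hcc
  -- no pattern at all: impossible
  exact absurd (no_pattern_contra hn hlen hno1 hno2 hno3) (by simp)

end Stmt5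


open Stmt5 in
/-- Let `S` be a nil semigroup of bounded index (`a ^ N = 0` for all `a`, for a fixed
positive `N`). If `S` satisfies an identity `x₁x₂⋯xₙ = v` with `x₁, …, xₙ` pairwise
distinct variables and `v` a word of length different from `n`, then `S` satisfies
`x₁x₂⋯xₙ = 0`. -/
theorem statement5 {V S : Type*} [SemigroupWithZero S]
    (N : ℕ) (hN : 1 ≤ N) (hnil : ∀ a : S, ppow a N = 0)
    (n : ℕ) (hn : 1 ≤ n) (x : Fin n → V) (hx : Function.Injective x)
    (v : List V) (hv : v ≠ []) (hlen : v.length ≠ n)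
    (h : ∀ f : V → S, evalWord f (List.ofFn x) = evalWord f v) :
    ∀ f : V → S, evalWord f (List.ofFn x) = some 0 := by
  classical
  intro f
  by_cases hcov : ∀ y ∈ v, y ∈ Set.range x
  · -- all letters of v are among the xᵢ: pass to the Fin n alphabet
    set r : V → Fin n := fun y => if hy : ∃ i, x i = y then hy.choose else ⟨0, by omega⟩
      with hr
    have hrx : ∀ i : Fin n, r (x i) = i := by
      intro i
      have hy : ∃ i', x i' = x i := ⟨i, rfl⟩
      simp only [hr, dif_pos hy]
      exact hx hy.choose_spec
    set w₀ : List (Fin n) := v.map r with hw₀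
    have hvw : w₀.map x = v := by
      rw [hw₀, List.map_map]
      have : ∀ y ∈ v, (x ∘ r) y = y := by
        intro y hy
        obtain ⟨i, rfl⟩ := hcov y hy
        simp [hrx]
      calc v.map (x ∘ r) = v.map id := List.map_congr_left this
        _ = v := List.map_id v
    have hvalid : Valid S w₀ := by
      intro g
      set f₀ : V → S := fun y => g (r y) with hf₀
      have hfx : ∀ t : Fin n, (f₀ ∘ x) t = g t := by
        intro t; simp [hf₀, hrx]
      have e1 : evalWord f₀ v = evalWord g w₀ := by
        rw [← hvw, evalWord_map]
        exact evalWord_congr (fun t _ => hfx t)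
      have e2 : evalWord f₀ (List.ofFn x) = evalWord g (List.finRange n) := by
        rw [List.ofFn_eq_map, evalWord_map]
        exact evalWord_congr (fun t _ => hfx t)
      rw [← e1, ← e2]
      exact (h f₀).symm
    have hmlen : w₀.length = v.length := by rw [hw₀, List.length_map]
    have goalform : evalWord f (List.ofFn x) = evalWord (f ∘ x) (List.finRange n) := by
      rw [List.ofFn_eq_map, evalWord_map]
    rcases Nat.lt_or_ge n w₀.length with hgt | hle
    · -- main case: the word is longer than n
      rw [goalform]
      exact core N hN hnil hn w₀ hvalid hgt (f ∘ x)
    · -- short case: some letter of Fin n is missing from w₀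
      have hlt : w₀.length < n := by omega
      have hmiss : ∃ i : Fin n, i ∉ w₀ := by
        by_contra hc
        push_neg at hc
        have h1 : (Finset.univ : Finset (Fin n)) ⊆ w₀.toFinset := by
          intro i _
          rw [List.mem_toFinset]
          exact hc i
        have h2 := Finset.card_le_card h1
        have h3 := List.toFinset_card_le w₀
        simp at h2
        omega
      obtain ⟨i₀, hi₀⟩ := hmiss
      have e1 : evalWord (Function.update (f ∘ x) i₀ 0) w₀ = evalWord (f ∘ x) w₀ := by
        apply evalWord_congr
        intro t ht
        exact Function.update_of_ne (by rintro rfl; exact hi₀ ht) 0 (f ∘ x)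
      have e2 : evalWord (Function.update (f ∘ x) i₀ 0) (List.finRange n) = some 0 := by
        apply evalWord_zero_mem _ (List.mem_finRange i₀)
        exact Function.update_self i₀ 0 (f ∘ x)
      rw [goalform, ← hvalid (f ∘ x), ← e1, hvalid _, e2]
  · -- some letter of v is not among the xᵢ: send it to 0
    push_neg at hcov
    obtain ⟨y₀, hy₀v, hy₀⟩ := hcov
    set f' : V → S := fun y => if y ∈ Set.range x then f y else 0 with hf'
    have e1 : evalWord f' (List.ofFn x) = evalWord f (List.ofFn x) := by
      apply evalWord_congr
      intro y hy
      rw [hf']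
      simp only [if_pos (show y ∈ Set.range x from List.mem_ofFn.mp hy)]
    have e2 : evalWord f' v = some 0 := by
      apply evalWord_zero_mem f' hy₀v
      simp only [hf']
      rw [if_neg hy₀]
    rw [← e1, h f', e2]
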